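/- arXiv:2410.05465 — 3 statements merged into one kernel-verified Lean document; each statement's English description precedes it below -/
import Mathlib

section
/- If f_1,...,f_k are nonzero polynomials with nonnegative coefficients and their product f_1·…·f_k is homogeneous, then each f_i is homogeneous. -/
open MvPolynomial

lemma coeff_prod_nonneg {n : ℕ} {ι : Type*} (s : Finset ι) (f : ι → MvPolynomial (Fin n) ℝ)
    (h : ∀ i ∈ s, ∀ m, 0 ≤ coeff m (f i)) : ∀ m, 0 ≤ coeff m (∏ i ∈ s, f i) := by
  refine Finset.prod_induction f (fun p => ∀ m, 0 ≤ coeff m p) ?_ ?_ h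
  · intro a b ha hb m
    rw [coeff_mul]
    exact Finset.sum_nonneg fun x _ => mul_nonneg (ha _) (hb _)
  · intro m
    simp only [coeff_one]
    positivity

lemma key_lemma {n : ℕ} (p q : MvPolynomial (Fin n) ℝ)
    (hp : ∀ m, 0 ≤ coeff m p) (hq : ∀ m, 0 ≤ coeff m q) (hq0 : q ≠ 0)
    (d : ℕ) (h : (p * q).IsHomogeneous d) : ∃ e, p.IsHomogeneous e := by
  by_cases hp0 : p = 0
  · exact ⟨0, hp0 ▸ isHomogeneous_zero _ _ _⟩
  obtain ⟨s, hs⟩ := (support_nonempty (p := q)).2 hq0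
  rw [mem_support_iff] at hs
  have main : ∀ m : Fin n →₀ ℕ, coeff m p ≠ 0 →
      (Finsupp.weight 1) m + (Finsupp.weight 1) s = d := by
    intro m hm
    have hpos : 0 < coeff (m + s) (p * q) := by
      rw [coeff_mul]
      have hmem : (m, s) ∈ Finset.HasAntidiagonal.antidiagonal (m + s) := by
        rw [Finset.HasAntidiagonal.mem_antidiagonal]
      refine lt_of_lt_of_le ?_ (Finset.single_le_sum
        (fun x _ => mul_nonneg (hp _) (hq _)) hmem)
      exact mul_pos ((hp m).lt_of_ne (Ne.symm hm)) ((hq s).lt_of_ne (Ne.symm hs))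
    have := h (ne_of_gt hpos)
    rwa [map_add] at this
  obtain ⟨m₀, hm₀⟩ := (support_nonempty (p := p)).2 hp0
  rw [mem_support_iff] at hm₀
  refine ⟨(Finsupp.weight 1) m₀, fun m hm => ?_⟩
  have h1 := main m hm
  have h2 := main m₀ hm₀
  omega

/-- If `f 1, …, f k` are nonzero real polynomials with nonnegative coefficients and their
product is homogeneous, then each `f i` is homogeneous. -/
theorem stmt5 {n k : ℕ} (f : Fin k → MvPolynomial (Fin n) ℝ)
    (hne : ∀ i, f i ≠ 0)
    (hpos : ∀ i (m : Fin n →₀ ℕ), 0 ≤ coeff m (f i))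
    (d : ℕ) (hhom : (∏ i, f i).IsHomogeneous d) :
    ∀ i, ∃ d' : ℕ, (f i).IsHomogeneous d' := by
  intro i
  have hsplit : (∏ j, f j) = f i * ∏ j ∈ Finset.univ.erase i, f j :=
    (Finset.mul_prod_erase Finset.univ f (Finset.mem_univ i)).symm
  rw [hsplit] at hhom
  refine key_lemma _ _ (hpos i) (coeff_prod_nonneg _ _ fun j _ => hpos j) ?_ d hhom
  exact Finset.prod_ne_zero_iff.2 fun j _ => hne j
end

section
/- For the recursively defined polynomial family H_{u,v} (with H_{u,v} = x_{u,v} when |u|=|v|=k and H_{u,v} = Σ_{a=1}^{2} H_{u1,va}·H_{u2,va} otherwise), the polynomial H_{∅,∅} has exactly 2^{2^k - 1} monomials, each with coefficient 1. -/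
open MvPolynomial

section Aux

variable {σ : Type*} [DecidableEq σ]

lemma split_unique {V1 V2 : Set σ} (hd : Disjoint V1 V2)
    {a b m1 m2 : σ →₀ ℕ} (ha : ↑a.support ⊆ V1) (hb : ↑b.support ⊆ V2)
    (h1 : ↑m1.support ⊆ V1) (h2 : ↑m2.support ⊆ V2) (h : a + b = m1 + m2) :
    a = m1 ∧ b = m2 := by
  have key : a = m1 := by
    ext p
    have happ := DFunLike.congr_fun h p
    simp only [Finsupp.add_apply] at happ
    by_cases hp : p ∈ V1
    · have hbp : b p = 0 := by
        by_contra hbp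
        exact (Set.disjoint_left.mp hd hp) (hb (Finsupp.mem_support_iff.mpr hbp))
      have hm2p : m2 p = 0 := by
        by_contra hm2p
        exact (Set.disjoint_left.mp hd hp) (h2 (Finsupp.mem_support_iff.mpr hm2p))
      omega
    · have hap : a p = 0 := by
        by_contra hap
        exact hp (ha (Finsupp.mem_support_iff.mpr hap))
      have hm1p : m1 p = 0 := by
        by_contra hm1p
        exact hp (h1 (Finsupp.mem_support_iff.mpr hm1p))
      omega
  refine ⟨key, ?_⟩
  have := key ▸ h
  exact add_left_cancel this

set_option maxHeartbeats 2000000 in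
lemma mul_lemma {V1 V2 : Set σ} (hd : Disjoint V1 V2)
    (f g : MvPolynomial σ ℝ)
    (hf : ∀ m ∈ f.support, coeff m f = 1 ∧ ↑m.support ⊆ V1)
    (hg : ∀ m ∈ g.support, coeff m g = 1 ∧ ↑m.support ⊆ V2) :
    ((f * g).support = (f.support ×ˢ g.support).image (fun p => p.1 + p.2)) ∧
      (f * g).support.card = f.support.card * g.support.card ∧
      ∀ m ∈ (f * g).support, coeff m (f * g) = 1 ∧ ↑m.support ⊆ V1 ∪ V2 := by
  have hcoeff : ∀ m1 ∈ f.support, ∀ m2 ∈ g.support, coeff (m1 + m2) (f * g) = 1 := by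
    intro m1 h1 m2 h2
    rw [coeff_mul]
    rw [Finset.sum_eq_single_of_mem (m1, m2) (Finset.HasAntidiagonal.mem_antidiagonal.mpr rfl)]
    · rw [(hf m1 h1).1, (hg m2 h2).1]; ring
    · rintro ⟨a, b⟩ hab hne
      rw [Finset.HasAntidiagonal.mem_antidiagonal] at hab
      by_contra hz
      have ha' : coeff a f ≠ 0 := fun h => hz (by simp [h])
      have hb' : coeff b g ≠ 0 := fun h => hz (by simp [h])
      obtain ⟨ea, eb⟩ := split_unique hd
        (hf a (mem_support_iff.mpr ha')).2 (hg b (mem_support_iff.mpr hb')).2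
        (hf m1 h1).2 (hg m2 h2).2 hab
      exact hne (Prod.ext ea eb)
  have hsupp : (f * g).support = (f.support ×ˢ g.support).image (fun p => p.1 + p.2) := by
    ext m
    constructor
    · intro hm
      have hm' : coeff m (f * g) ≠ 0 := mem_support_iff.mp hm
      rw [coeff_mul] at hm'
      obtain ⟨⟨a, b⟩, hab, hne⟩ := Finset.exists_ne_zero_of_sum_ne_zero hm'
      rw [Finset.HasAntidiagonal.mem_antidiagonal] at hab
      have ha : a ∈ f.support := mem_support_iff.mpr (fun h => hne (by simp [h]))
      have hb : b ∈ g.support := mem_support_iff.mpr (fun h => hne (by simp [h]))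
      exact Finset.mem_image.mpr ⟨(a, b), Finset.mem_product.mpr ⟨ha, hb⟩, hab⟩
    · intro hm
      obtain ⟨⟨a, b⟩, hab, rfl⟩ := Finset.mem_image.mp hm
      obtain ⟨ha, hb⟩ := Finset.mem_product.mp hab
      exact mem_support_iff.mpr (by rw [hcoeff a ha b hb]; norm_num)
  refine ⟨hsupp, ?_, ?_⟩
  · rw [hsupp, Finset.card_image_of_injOn, Finset.card_product]
    rintro ⟨a, b⟩ hab ⟨c, d⟩ hcd h
    simp only [Finset.coe_product, Set.mem_prod, Finset.mem_coe] at hab hcd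
    obtain ⟨e1, e2⟩ := split_unique hd (hf a hab.1).2 (hg b hab.2).2
      (hf c hcd.1).2 (hg d hcd.2).2 h
    exact Prod.ext e1 e2
  · intro m hm
    rw [hsupp] at hm
    obtain ⟨⟨a, b⟩, hab, rfl⟩ := Finset.mem_image.mp hm
    obtain ⟨ha, hb⟩ := Finset.mem_product.mp hab
    refine ⟨hcoeff a ha b hb, ?_⟩
    intro p hp
    rcases Finset.mem_union.mp (Finsupp.support_add hp) with h | h
    · exact Or.inl ((hf a ha).2 h)
    · exact Or.inr ((hg b hb).2 h)

lemma add_lemma (f g : MvPolynomial σ ℝ) (h : Disjoint f.support g.support) :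
    (f + g).support = f.support ∪ g.support := by
  ext m
  simp only [Finset.mem_union, mem_support_iff, coeff_add]
  constructor
  · intro h0
    by_contra hc
    push_neg at hc
    simp [hc.1, hc.2] at h0
  · rintro (h0 | h0)
    · have hg0 : coeff m g = 0 := by
        by_contra hg0
        exact Finset.disjoint_left.mp h (mem_support_iff.mpr h0) (mem_support_iff.mpr hg0)
      simpa [hg0] using h0
    · have hf0 : coeff m f = 0 := by
        by_contra hf0
        exact Finset.disjoint_left.mp h (mem_support_iff.mpr hf0) (mem_support_iff.mpr h0)
      simpa [hf0] using h0

end Aux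

lemma listne (w : List (Fin 2)) (x y : Fin 2) (hxy : x ≠ y) (l : List (Fin 2))
    (h1 : (w ++ [x]) <+: l) (h2 : (w ++ [y]) <+: l) : False := by
  have hpre := List.prefix_of_prefix_length_le h1 h2 (by simp)
  have heq := hpre.eq_of_length (by simp)
  exact hxy (by simpa using List.append_cancel_left heq)

lemma addne (m1 m2 : (List (Fin 2) × List (Fin 2)) →₀ ℕ) (h1 : m1 ≠ 0) :
    m1 + m2 ≠ 0 := by
  intro h
  apply h1
  ext p
  have := DFunLike.congr_fun h p
  simp only [Finsupp.add_apply, Finsupp.coe_zero, Pi.zero_apply] at this ⊢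
  omega

noncomputable def Hpoly : ℕ → List (Fin 2) → List (Fin 2) →
    MvPolynomial (List (Fin 2) × List (Fin 2)) ℝ
  | 0, u, v => X (u, v)
  | r + 1, u, v =>
      ∑ a : Fin 2, Hpoly r (u ++ [0]) (v ++ [a]) * Hpoly r (u ++ [1]) (v ++ [a])

lemma key (r : ℕ) : ∀ u v : List (Fin 2),
    (Hpoly r u v).support.card = 2 ^ (2 ^ r - 1) ∧
      ∀ m ∈ (Hpoly r u v).support, coeff m (Hpoly r u v) = 1 ∧ m ≠ 0 ∧
        ∀ p ∈ m.support, u <+: p.1 ∧ v <+: p.2 := by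
  induction r with
  | zero =>
    intro u v
    have hX : Hpoly 0 u v = X (u, v) := rfl
    rw [hX]
    constructor
    · rw [support_X]; simp
    · intro m hm
      rw [support_X, Finset.mem_singleton] at hm
      subst hm
      refine ⟨?_, ?_, ?_⟩
      · simp [coeff_X]
      · exact by simp [Finsupp.single_eq_zero]
      · intro p hp
        rw [Finsupp.support_single_ne_zero _ one_ne_zero, Finset.mem_singleton] at hp
        subst hp
        exact ⟨List.prefix_refl u, List.prefix_refl v⟩
  | succ r ih =>
    intro u v
    set f : Fin 2 → MvPolynomial (List (Fin 2) × List (Fin 2)) ℝ :=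
      fun a => Hpoly r (u ++ [0]) (v ++ [a]) with hfdef
    set g : Fin 2 → MvPolynomial (List (Fin 2) × List (Fin 2)) ℝ :=
      fun a => Hpoly r (u ++ [1]) (v ++ [a]) with hgdef
    have hH : Hpoly (r + 1) u v = f 0 * g 0 + f 1 * g 1 := by
      rw [Hpoly, Fin.sum_univ_two]
    have main : ∀ a : Fin 2,
        ((f a * g a).support.card = 2 ^ (2 ^ r - 1) * 2 ^ (2 ^ r - 1)) ∧
        ∀ m ∈ (f a * g a).support, coeff m (f a * g a) = 1 ∧ m ≠ 0 ∧
          ∀ p ∈ m.support, u <+: p.1 ∧ (v ++ [a]) <+: p.2 := by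
      intro a
      have ihf := ih (u ++ [0]) (v ++ [a])
      have ihg := ih (u ++ [1]) (v ++ [a])
      set V1 : Set (List (Fin 2) × List (Fin 2)) :=
        {p | (u ++ [0]) <+: p.1 ∧ (v ++ [a]) <+: p.2} with hV1
      set V2 : Set (List (Fin 2) × List (Fin 2)) :=
        {p | (u ++ [1]) <+: p.1 ∧ (v ++ [a]) <+: p.2} with hV2
      have hd : Disjoint V1 V2 := by
        rw [Set.disjoint_left]
        rintro p ⟨hp1, -⟩ ⟨hp2, -⟩
        exact listne u 0 1 (by decide) p.1 hp1 hp2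
      have hf' : ∀ m ∈ (f a).support, coeff m (f a) = 1 ∧ ↑m.support ⊆ V1 := by
        intro m hm
        obtain ⟨c1, -, c3⟩ := ihf.2 m hm
        exact ⟨c1, fun p hp => c3 p hp⟩
      have hg' : ∀ m ∈ (g a).support, coeff m (g a) = 1 ∧ ↑m.support ⊆ V2 := by
        intro m hm
        obtain ⟨c1, -, c3⟩ := ihg.2 m hm
        exact ⟨c1, fun p hp => c3 p hp⟩
      obtain ⟨hseq, hcard, hco⟩ := mul_lemma hd (f a) (g a) hf' hg'
      constructor
      · rw [hcard, ihf.1, ihg.1]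
      · intro m hm
        obtain ⟨c1, c2⟩ := hco m hm
        refine ⟨c1, ?_, ?_⟩
        · rw [hseq] at hm
          obtain ⟨⟨m1, m2⟩, hab, rfl⟩ := Finset.mem_image.mp hm
          obtain ⟨h1, h2⟩ := Finset.mem_product.mp hab
          exact addne m1 m2 (ihf.2 m1 h1).2.1
        · intro p hp
          rcases c2 hp with h | h
          · exact ⟨(List.prefix_append u [0]).trans h.1, h.2⟩
          · exact ⟨(List.prefix_append u [1]).trans h.1, h.2⟩
    have hdsupp : Disjoint (f 0 * g 0).support (f 1 * g 1).support := by
      rw [Finset.disjoint_left]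
      intro m h0 h1
      obtain ⟨-, hne, hpre0⟩ := (main 0).2 m h0
      obtain ⟨-, -, hpre1⟩ := (main 1).2 m h1
      obtain ⟨p, hp⟩ := Finsupp.support_nonempty_iff.mpr hne
      exact listne v 0 1 (by decide) p.2 (hpre0 p hp).2 (hpre1 p hp).2
    have hsupp := add_lemma (f 0 * g 0) (f 1 * g 1) hdsupp
    rw [hH]
    constructor
    · rw [hsupp, Finset.card_union_of_disjoint hdsupp, (main 0).1, (main 1).1]
      have h1 : 1 ≤ 2 ^ r := Nat.one_le_two_pow
      have h2 : 2 ^ (r + 1) = 2 * 2 ^ r := by ring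
      have he : 2 ^ (r + 1) - 1 = (2 ^ r - 1) + (2 ^ r - 1) + 1 := by omega
      rw [he, pow_add, pow_add, pow_one]
      ring
    · intro m hm
      rw [hsupp, Finset.mem_union] at hm
      rcases hm with hmA | hmB
      · have hB : coeff m (f 1 * g 1) = 0 := by
          by_contra h
          exact Finset.disjoint_left.mp hdsupp hmA (mem_support_iff.mpr h)
        obtain ⟨c1, c2, c3⟩ := (main 0).2 m hmA
        refine ⟨by rw [coeff_add, c1, hB]; ring, c2, ?_⟩
        intro p hp
        obtain ⟨hp1, hp2⟩ := c3 p hp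
        exact ⟨hp1, (List.prefix_append v [0]).trans hp2⟩
      · have hA : coeff m (f 0 * g 0) = 0 := by
          by_contra h
          exact Finset.disjoint_left.mp hdsupp (mem_support_iff.mpr h) hmB
        obtain ⟨c1, c2, c3⟩ := (main 1).2 m hmB
        refine ⟨by rw [coeff_add, c1, hA]; ring, c2, ?_⟩
        intro p hp
        obtain ⟨hp1, hp2⟩ := c3 p hp
        exact ⟨hp1, (List.prefix_append v [1]).trans hp2⟩

/-- `H_{∅,∅}` has exactly `2 ^ (2 ^ k - 1)` monomials, each with coefficient 1. -/
theorem stmt8 (k : ℕ) :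
    (Hpoly k [] []).support.card = 2 ^ (2 ^ k - 1) ∧
      ∀ m ∈ (Hpoly k [] []).support, coeff m (Hpoly k [] []) = 1 := by
  obtain ⟨h1, h2⟩ := key k [] []
  exact ⟨h1, fun m hm => (h2 m hm).1⟩
end

section
/- Let n = 2^{2k}. Consider the polynomial P_j defined recursively on levels: at level 0 there are 2^{2k-1} polynomials f_i = x_{2i-1}·x_{2i}; at each odd step, consecutive pairs of polynomials are summed; at each even step, consecutive pairs are multiplied; after 2k−1 alternating steps a single polynomial P remains. Then P is a homogeneous multilinear polynomial of total degree 2^k in the n variables x_1,...,x_n, and it contains exactly 2^{2^k - 1} monomials. -/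
open MvPolynomial

/-- Replace consecutive pairs `(g₁, g₂, g₃, g₄, …)` of a list by `(op g₁ g₂, op g₃ g₄, …)`. -/
def pairStep {α : Type*} (op : α → α → α) : List α → List α
  | a :: b :: l => op a b :: pairStep op l
  | l => l

/-- The alternating construction: apply `j` steps to the starting list, where
odd-numbered steps sum consecutive pairs and even-numbered steps multiply them
(the first step is a sum step). -/
noncomputable def altRun (start : List (MvPolynomial ℕ ℝ)) :
    ℕ → List (MvPolynomial ℕ ℝ)
  | 0 => start
  | j + 1 => pairStep (if (j + 1) % 2 = 1 then (· + ·) else (· * ·)) (altRun start j)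

/-- The starting list `(x₁x₂, x₃x₄, …, x_{n-1}x_n)` of `n/2 = 2^(2k-1)` products. -/
noncomputable def altInit (k : ℕ) : List (MvPolynomial ℕ ℝ) :=
  (List.range (2 ^ (2 * k - 1))).map (fun i => X (2 * i + 1) * X (2 * i + 2))

/- ### Auxiliary development -/

/-- `Elem d c e lo p` : `p` is a sum of `2^e` distinct monomials, each with all
exponents ≤ 1, total degree `d`, and variables in the interval `(lo, lo + c]`. -/
def Elem (d c e lo : ℕ) (p : MvPolynomial ℕ ℝ) : Prop :=
  ∃ S : Finset (ℕ →₀ ℕ), p = ∑ m ∈ S, monomial m (1 : ℝ) ∧ S.card = 2 ^ e ∧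
    ∀ m ∈ S, (∀ v, m v ≤ 1) ∧ m.degree = d ∧
      ∀ v ∈ m.support, lo < v ∧ v ≤ lo + c

/-- Each element of the list satisfies `Elem`, with consecutive variable intervals. -/
def GoodList (d c e : ℕ) : ℕ → List (MvPolynomial ℕ ℝ) → Prop
  | _, [] => True
  | lo, p :: l => Elem d c e lo p ∧ GoodList d c e (lo + c) l

lemma Finsupp.degree_add' (a b : ℕ →₀ ℕ) : (a + b).degree = a.degree + b.degree := by
  simp [Finsupp.degree_eq_weight_one, map_add]

lemma elem_add {d c e lo : ℕ} {p q : MvPolynomial ℕ ℝ} (hd : 1 ≤ d)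
    (hp : Elem d c e lo p) (hq : Elem d c e (lo + c) q) :
    Elem d (2 * c) (e + 1) lo (p + q) := by
  obtain ⟨S, hSp, hScard, hSmem⟩ := hp
  obtain ⟨T, hTp, hTcard, hTmem⟩ := hq
  have hdisj : Disjoint S T := by
    rw [Finset.disjoint_left]
    intro m hmS hmT
    obtain ⟨_, hmd, hvS⟩ := hSmem m hmS
    obtain ⟨_, _, hvT⟩ := hTmem m hmT
    have hne : m ≠ 0 := by
      intro h; rw [h, map_zero] at hmd; omega
    obtain ⟨v, hv⟩ := Finsupp.support_nonempty_iff.mpr hne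
    have h1 := hvS v hv
    have h2 := hvT v hv
    omega
  refine ⟨S ∪ T, ?_, ?_, ?_⟩
  · rw [hSp, hTp, Finset.sum_union hdisj]
  · rw [Finset.card_union_of_disjoint hdisj, hScard, hTcard]; ring
  · intro m hm
    rcases Finset.mem_union.mp hm with h | h
    · obtain ⟨h1, h2, h3⟩ := hSmem m h
      exact ⟨h1, h2, fun v hv => by have := h3 v hv; omega⟩
    · obtain ⟨h1, h2, h3⟩ := hTmem m h
      exact ⟨h1, h2, fun v hv => by have := h3 v hv; omega⟩

lemma elem_mul {d c e lo : ℕ} {p q : MvPolynomial ℕ ℝ}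
    (hp : Elem d c e lo p) (hq : Elem d c e (lo + c) q) :
    Elem (2 * d) (2 * c) (2 * e) lo (p * q) := by
  classical
  obtain ⟨S, hSp, hScard, hSmem⟩ := hp
  obtain ⟨T, hTp, hTcard, hTmem⟩ := hq
  -- injectivity of addition on S ×ˢ T
  have hinj : Set.InjOn (fun x : (ℕ →₀ ℕ) × (ℕ →₀ ℕ) => x.1 + x.2) ↑(S ×ˢ T) := by
    rintro ⟨a, b⟩ hab ⟨a', b'⟩ hab' h
    simp only [Finset.coe_mem, Finset.mem_coe, Finset.mem_product] at hab hab'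
    have h' : a + b = a' + b' := h
    have ha : ∀ v, a v = a' v := by
      intro v
      by_cases hv : v ≤ lo + c
      · have hb : b v = 0 := by
          by_contra hb0
          have := (hTmem b hab.2).2.2 v (Finsupp.mem_support_iff.mpr hb0)
          omega
        have hb' : b' v = 0 := by
          by_contra hb0
          have := (hTmem b' hab'.2).2.2 v (Finsupp.mem_support_iff.mpr hb0)
          omega
        have := DFunLike.congr_fun h' v
        simp only [Finsupp.add_apply] at this
        simpa [hb, hb'] using this
      · have ha0 : a v = 0 := by
          by_contra h0
          have := (hSmem a hab.1).2.2 v (Finsupp.mem_support_iff.mpr h0)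
          omega
        have ha0' : a' v = 0 := by
          by_contra h0
          have := (hSmem a' hab'.1).2.2 v (Finsupp.mem_support_iff.mpr h0)
          omega
        rw [ha0, ha0']
    have haa : a = a' := Finsupp.ext ha
    have hbb : b = b' := by
      rw [← haa] at h'
      exact add_left_cancel h'
    simp [haa, hbb]
  refine ⟨(S ×ˢ T).image (fun x => x.1 + x.2), ?_, ?_, ?_⟩
  · have himg : ∑ m ∈ (S ×ˢ T).image (fun x => x.1 + x.2), monomial m (1:ℝ) =
        ∑ x ∈ S ×ˢ T, monomial (x.1 + x.2) (1:ℝ) :=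
      Finset.sum_image (fun x hx y hy h => hinj hx hy h)
    rw [hSp, hTp, Finset.sum_mul_sum, himg, Finset.sum_product]
    refine Finset.sum_congr rfl fun a _ => Finset.sum_congr rfl fun b _ => ?_
    rw [monomial_mul, one_mul]
  · rw [Finset.card_image_of_injOn hinj, Finset.card_product, hScard, hTcard]
    rw [← pow_add]; ring_nf
  · intro m hm
    obtain ⟨⟨a, b⟩, hab, rfl⟩ := Finset.mem_image.mp hm
    rw [Finset.mem_product] at hab
    obtain ⟨ha1, ha2, ha3⟩ := hSmem a hab.1
    obtain ⟨hb1, hb2, hb3⟩ := hTmem b hab.2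
    refine ⟨?_, ?_, ?_⟩
    · intro v
      by_cases hv : v ≤ lo + c
      · have hb : b v = 0 := by
          by_contra hb0
          have := hb3 v (Finsupp.mem_support_iff.mpr hb0)
          omega
        simp only [Finsupp.add_apply, hb]
        have := ha1 v; omega
      · have ha : a v = 0 := by
          by_contra h0
          have := ha3 v (Finsupp.mem_support_iff.mpr h0)
          omega
        simp only [Finsupp.add_apply, ha]
        have := hb1 v; omega
    · rw [Finsupp.degree_add', ha2, hb2]; ring
    · intro v hv
      have : v ∈ a.support ∪ b.support := Finsupp.support_add hv
      rcases Finset.mem_union.mp this with h | h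
      · have := ha3 v h; omega
      · have := hb3 v h; omega

lemma goodList_sum {d c e : ℕ} (hd : 1 ≤ d) :
    ∀ (n : ℕ) (l : List (MvPolynomial ℕ ℝ)) (lo : ℕ), l.length = 2 * n →
    GoodList d c e lo l → GoodList d (2 * c) (e + 1) lo (pairStep (· + ·) l) := by
  intro n
  induction n with
  | zero => intro l lo hl _; match l, hl with | [], _ => exact trivial
  | succ n ih =>
    intro l lo hl hg
    match l, hl with
    | p :: q :: l, hl =>
      obtain ⟨hp, hq, hgl⟩ := hg
      refine ⟨elem_add hd hp hq, ?_⟩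
      have : lo + c + c = lo + 2 * c := by ring
      rw [this] at hgl
      have hlen : l.length = 2 * n := by simp at hl; omega
      simpa using ih l (lo + 2 * c) hlen hgl

lemma goodList_mul {d c e : ℕ} :
    ∀ (n : ℕ) (l : List (MvPolynomial ℕ ℝ)) (lo : ℕ), l.length = 2 * n →
    GoodList d c e lo l → GoodList (2 * d) (2 * c) (2 * e) lo (pairStep (· * ·) l) := by
  intro n
  induction n with
  | zero => intro l lo hl _; match l, hl with | [], _ => exact trivial
  | succ n ih =>
    intro l lo hl hg
    match l, hl with
    | p :: q :: l, hl =>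
      obtain ⟨hp, hq, hgl⟩ := hg
      refine ⟨elem_mul hp hq, ?_⟩
      have : lo + c + c = lo + 2 * c := by ring
      rw [this] at hgl
      have hlen : l.length = 2 * n := by simp at hl; omega
      simpa using ih l (lo + 2 * c) hlen hgl

lemma pairStep_length {α : Type*} (op : α → α → α) :
    ∀ (n : ℕ) (l : List α), l.length = 2 * n → (pairStep op l).length = n := by
  intro n
  induction n with
  | zero => intro l hl; match l, hl with | [], _ => rfl
  | succ n ih =>
    intro l hl
    match l, hl with
    | a :: b :: l, hl =>
      have : l.length = 2 * n := by simp at hl; omega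
      simp [pairStep, ih l this]

lemma goodList_init : ∀ (n a : ℕ),
    GoodList 2 2 0 (2 * a) (((List.range' a n).map (fun i => X (2 * i + 1) * X (2 * i + 2)))) := by
  intro n
  induction n with
  | zero => intro a; exact trivial
  | succ n ih =>
    intro a
    rw [List.range'_succ]
    refine ⟨?_, by simpa [two_mul, mul_add] using ih (a + 1)⟩
    refine ⟨{Finsupp.single (2 * a + 1) 1 + Finsupp.single (2 * a + 2) 1}, ?_, rfl, ?_⟩
    · simp only []
      rw [Finset.sum_singleton]
      show X (2 * a + 1) * X (2 * a + 2) = _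
      rw [
        show (X (2 * a + 1) : MvPolynomial ℕ ℝ) = monomial (Finsupp.single (2 * a + 1) 1) 1
          from rfl,
        show (X (2 * a + 2) : MvPolynomial ℕ ℝ) = monomial (Finsupp.single (2 * a + 2) 1) 1
          from rfl,
        monomial_mul, one_mul]
    · intro m hm
      rw [Finset.mem_singleton] at hm
      subst hm
      refine ⟨?_, ?_, ?_⟩
      · intro v
        simp only [Finsupp.add_apply, Finsupp.single_apply]
        split_ifs <;> omega
      · rw [Finsupp.degree_add']
        have hs : ∀ w : ℕ, (Finsupp.single w 1 : ℕ →₀ ℕ).degree = 1 := by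
          intro w
          exact Finsupp.degree_single w 1
        rw [hs, hs]
      · intro v hv
        have := Finsupp.support_add hv
        rcases Finset.mem_union.mp this with h | h <;>
          rw [Finsupp.support_single_ne_zero _ one_ne_zero] at h <;>
          simp only [Finset.mem_singleton] at h <;> omega

/-- The main invariant along the run. -/
lemma altRun_good (k : ℕ) (hk : 1 ≤ k) :
    ∀ j, j ≤ 2 * k - 1 →
      (altRun (altInit k) j).length = 2 ^ (2 * k - 1 - j) ∧
      GoodList (2 ^ (j / 2 + 1)) (2 ^ (j + 1)) (2 ^ (j / 2 + 1) - 2 + j % 2) 0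
        (altRun (altInit k) j) := by
  intro j
  induction j with
  | zero =>
    intro _
    constructor
    · simp [altRun, altInit]
    · have := goodList_init (2 ^ (2 * k - 1)) 0
      simpa [altRun, altInit, List.range_eq_range'] using this
  | succ j ih =>
    intro hj
    obtain ⟨hlen, hgood⟩ := ih (by omega)
    have hlen2 : (altRun (altInit k) j).length = 2 * 2 ^ (2 * k - 1 - (j + 1)) := by
      rw [hlen, ← pow_succ']
      congr 1
      omega
    rcases Nat.even_or_odd j with he | ho
    · -- j even, step j+1 is a sum step
      obtain ⟨t, ht⟩ := he
      have hmod : (j + 1) % 2 = 1 := by omega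
      have h1 : (j + 1) / 2 = j / 2 := by omega
      have h2 : (j + 1) % 2 = j % 2 + 1 := by omega
      constructor
      · show (pairStep _ _).length = _
        rw [if_pos hmod]
        exact pairStep_length _ _ _ hlen2
      · show GoodList _ _ _ _ (pairStep _ _)
        rw [if_pos hmod, h1, h2]
        have hd : 1 ≤ 2 ^ (j / 2 + 1) := Nat.one_le_two_pow
        have := goodList_sum hd _ _ 0 hlen2 hgood
        have harith : 2 ^ (j / 2 + 1) - 2 + j % 2 + 1 = 2 ^ (j / 2 + 1) - 2 + (j % 2 + 1) := by
          omega
        rw [← harith]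
        have hc : (2 : ℕ) * 2 ^ (j + 1) = 2 ^ (j + 1 + 1) := (pow_succ' 2 (j + 1)).symm
        rwa [hc] at this
    · -- j odd, step j+1 is a product step
      obtain ⟨t, ht⟩ := ho
      have hmod : ¬ (j + 1) % 2 = 1 := by omega
      constructor
      · show (pairStep _ _).length = _
        rw [if_neg hmod]
        exact pairStep_length _ _ _ hlen2
      · show GoodList _ _ _ _ (pairStep _ _)
        rw [if_neg hmod]
        have := goodList_mul _ _ 0 hlen2 hgood
        have h1 : (j + 1) / 2 = j / 2 + 1 := by omega
        have h2 : (j + 1) % 2 = 0 := by omega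
        have hd : 2 * 2 ^ (j / 2 + 1) = 2 ^ ((j + 1) / 2 + 1) := by
          rw [h1, ← pow_succ']
        have hc : (2 : ℕ) * 2 ^ (j + 1) = 2 ^ (j + 1 + 1) := (pow_succ' 2 (j + 1)).symm
        have he2 : 2 * (2 ^ (j / 2 + 1) - 2 + j % 2) =
            2 ^ ((j + 1) / 2 + 1) - 2 + (j + 1) % 2 := by
          have hj2 : j % 2 = 1 := by omega
          have hpow : 2 ≤ 2 ^ (j / 2 + 1) := by
            calc 2 = 2 ^ 1 := rfl
            _ ≤ 2 ^ (j / 2 + 1) := Nat.pow_le_pow_right (by norm_num) (by omega)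
          rw [h1, h2, hj2]
          have : 2 ^ (j / 2 + 1 + 1) = 2 * 2 ^ (j / 2 + 1) := by rw [pow_succ]; ring
          omega
        rwa [hd, hc, he2] at this

/-- After the `2k - 1` alternating sum/product steps starting from
`(x₁x₂, …, x_{n-1}x_n)` with `n = 2^(2k)`, a single polynomial `P` remains; `P` is a
homogeneous multilinear polynomial of total degree `2^k` in the variables `x₁, …, x_n`,
with exactly `2^(2^k - 1)` monomials. -/
theorem stmt13 (k : ℕ) (hk : 1 ≤ k) (P : MvPolynomial ℕ ℝ)
    (hP : altRun (altInit k) (2 * k - 1) = [P]) :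
    P.IsHomogeneous (2 ^ k) ∧
      (∀ m ∈ P.support, ∀ i : ℕ, m i ≤ 1) ∧
      (∀ i ∈ P.vars, 1 ≤ i ∧ i ≤ 2 ^ (2 * k)) ∧
      P.support.card = 2 ^ (2 ^ k - 1) := by
  classical
  obtain ⟨hlen, hgood⟩ := altRun_good k hk (2 * k - 1) le_rfl
  rw [hP] at hgood
  obtain ⟨hElem, -⟩ := hgood
  have hdiv : (2 * k - 1) / 2 + 1 = k := by omega
  have hmod : (2 * k - 1) % 2 = 1 := by omega
  rw [hdiv, hmod] at hElem
  have hpow2 : 2 ≤ 2 ^ k := by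
    calc 2 = 2 ^ 1 := rfl
    _ ≤ 2 ^ k := Nat.pow_le_pow_right (by norm_num) hk
  have hE : 2 ^ k - 2 + 1 = 2 ^ k - 1 := by omega
  rw [hE] at hElem
  obtain ⟨S, hPsum, hScard, hSmem⟩ := hElem
  -- the support of P is exactly S
  have hcoeff : ∀ m, MvPolynomial.coeff m P = if m ∈ S then 1 else 0 := by
    intro m
    rw [hPsum, MvPolynomial.coeff_sum]
    rw [Finset.sum_congr rfl (fun m' _ => MvPolynomial.coeff_monomial m m' 1)]
    simp [Finset.sum_ite_eq']
  have hsupp : P.support = S := by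
    ext m
    rw [MvPolynomial.mem_support_iff, hcoeff]
    by_cases h : m ∈ S <;> simp [h]
  refine ⟨?_, ?_, ?_, ?_⟩
  · -- homogeneous
    rw [hPsum]
    apply MvPolynomial.IsHomogeneous.sum
    intro m hm
    exact MvPolynomial.isHomogeneous_monomial _ ((hSmem m hm).2.1)
  · intro m hm i
    rw [hsupp] at hm
    exact (hSmem m hm).1 i
  · intro i hi
    rw [MvPolynomial.mem_vars] at hi
    obtain ⟨m, hm, him⟩ := hi
    rw [hsupp] at hm
    have h := (hSmem m hm).2.2 i him
    have heq : 2 * k - 1 + 1 = 2 * k := by omega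
    rw [heq] at h
    exact ⟨h.1, by simpa using h.2⟩
  · rw [hsupp, hScard]
end
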